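/- For every real t and every x > 0 with x ≠ 1, the function f_{L_t}(x) = (x−1)²(x+1)^t / (2^t x^{(t+1)/2}) is strictly increasing in t; consequently for s < t, L_s(a,b) < L_t(a,b) for all a,b > 0 with a ≠ b, where L_t(a,b) = (a−b)²(a+b)^t / (2^t (√(ab))^{t+1}). -/

import Mathlib

lemma sq_pos' {a : ℝ} (h : a ≠ 0) : 0 < a ^ 2 :=
  lt_of_le_of_ne (sq_nonneg a) (Ne.symm (pow_ne_zero 2 h))

lemma aux_rw (A P Q S : ℝ) (hP : 0 < P) (hQ : 0 < Q) (hS : 0 < S) (t : ℝ) :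
    A * P^t / (Q^t * S^(t+1)) = (A/S) * (P/(Q*S))^t := by
  rw [Real.div_rpow hP.le (mul_nonneg hQ.le hS.le), Real.mul_rpow hQ.le hS.le,
    Real.rpow_add hS, Real.rpow_one]
  have h1 : Q^t ≠ 0 := (Real.rpow_pos_of_pos hQ t).ne'
  have h2 : S^t ≠ 0 := (Real.rpow_pos_of_pos hS t).ne'
  field_simp

lemma aux (A P Q S : ℝ) (hA : 0 < A) (hQ : 0 < Q) (hS : 0 < S)
    (hR : 1 < P/(Q*S)) : StrictMono (fun t : ℝ => A * P^t / (Q^t * S^(t+1))) := by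
  have hQS : 0 < Q * S := mul_pos hQ hS
  have hP : 0 < P := by
    rcases le_or_gt P 0 with h | h
    · exfalso
      have : P / (Q*S) ≤ 0 := div_nonpos_of_nonpos_of_nonneg h hQS.le
      linarith
    · exact h
  intro s t hst
  simp only [aux_rw A P Q S hP hQ hS]
  exact mul_lt_mul_of_pos_left ((Real.rpow_lt_rpow_left_iff hR).mpr hst)
    (div_pos hA hS)

lemma sqrt_ratio_gt (x : ℝ) (hx : 0 < x) (hx1 : x ≠ 1) :
    1 < (x + 1) / (2 * Real.sqrt x) := by
  have hs : 0 < Real.sqrt x := Real.sqrt_pos.mpr hx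
  have hs1 : Real.sqrt x ≠ 1 := fun h => hx1 (by
    have := Real.sq_sqrt hx.le
    rw [h] at this; simpa using this.symm)
  have hsq : Real.sqrt x ^ 2 = x := Real.sq_sqrt hx.le
  rw [lt_div_iff₀ (by positivity)]
  nlinarith [sq_pos' (sub_ne_zero.mpr hs1)]

theorem L_t_strict_mono :
    (∀ x : ℝ, 0 < x → x ≠ 1 →
      StrictMono (fun t : ℝ => (x-1)^2 * (x+1)^t / (2^t * x^((t+1)/2)))) ∧
    (∀ s t : ℝ, s < t → ∀ a b : ℝ, 0 < a → 0 < b → a ≠ b →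
      (a-b)^2 * (a+b)^s / (2^s * (Real.sqrt (a*b))^(s+1)) <
      (a-b)^2 * (a+b)^t / (2^t * (Real.sqrt (a*b))^(t+1))) := by
  constructor
  · intro x hx hx1
    have hs : 0 < Real.sqrt x := Real.sqrt_pos.mpr hx
    have key : ∀ t : ℝ, x^((t+1)/2) = (Real.sqrt x)^(t+1) := by
      intro t
      rw [Real.sqrt_eq_rpow, ← Real.rpow_mul hx.le]
      congr 1
      ring
    have hA : (0:ℝ) < (x-1)^2 := sq_pos' (sub_ne_zero.mpr hx1)
    have h := aux ((x-1)^2) (x+1) 2 (Real.sqrt x) hA two_pos hs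
      (sqrt_ratio_gt x hx hx1)
    simpa only [key] using h
  · intro s t hst a b ha hb hab
    have hsp : 0 < Real.sqrt (a*b) := Real.sqrt_pos.mpr (mul_pos ha hb)
    have hA : (0:ℝ) < (a-b)^2 := sq_pos' (sub_ne_zero.mpr hab)
    have hR : 1 < (a + b) / (2 * Real.sqrt (a*b)) := by
      rw [lt_div_iff₀ (by positivity)]
      have h1 : Real.sqrt a ^ 2 = a := Real.sq_sqrt ha.le
      have h2 : Real.sqrt b ^ 2 = b := Real.sq_sqrt hb.le
      have h3 : Real.sqrt (a*b) = Real.sqrt a * Real.sqrt b := Real.sqrt_mul ha.le b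
      have h4 : Real.sqrt a ≠ Real.sqrt b := fun h => hab (by rw [← h1, ← h2, h])
      nlinarith [sq_pos' (sub_ne_zero.mpr h4)]
    exact aux ((a-b)^2) (a+b) 2 (Real.sqrt (a*b)) hA two_pos hsp hR hst
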